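/- Let T be an ergodic (Koopman operator of a) measure-preserving automorphism of a probability space, and let (P_j) be a sequence of Markov operators (positive contractions with P_j 1 = P_j* 1 = 1) such that T P_j − P_j → 0 in the weak operator topology. Then P_j → Θ in the weak operator topology, where Θ is the projection onto constants. -/

import Mathlib

open MeasureTheory Filter

/-- If `T` is the ergodic unitary Koopman operator of a measure-preserving
automorphism of a probability space and `(P_j)` is a sequence of Markov operators
(positive contractions with `P_j 1 = P_j* 1 = 1`) such that `T P_j − P_j → 0` in the
weak operator topology, then `P_j → Θ` weakly, where `Θ` is the projection onto
constants. -/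
theorem stmt4 {X : Type*} [MeasurableSpace X] (μ : Measure X) [IsProbabilityMeasure μ]
    (T : Lp ℝ 2 μ ≃ₗᵢ[ℝ] Lp ℝ 2 μ)
    (hT1 : T (Lp.const 2 μ (1 : ℝ)) = Lp.const 2 μ (1 : ℝ))
    (herg : ∀ f : Lp ℝ 2 μ, T f = f → ∃ c : ℝ, f = c • (Lp.const 2 μ (1 : ℝ)))
    (P : ℕ → (Lp ℝ 2 μ →L[ℝ] Lp ℝ 2 μ))
    (hpos : ∀ j, ∀ f : Lp ℝ 2 μ, 0 ≤ f → 0 ≤ P j f)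
    (hcontr : ∀ j, ‖P j‖ ≤ 1)
    (hP1 : ∀ j, P j (Lp.const 2 μ (1 : ℝ)) = Lp.const 2 μ (1 : ℝ))
    (hP1adj : ∀ j, ContinuousLinearMap.adjoint (P j) (Lp.const 2 μ (1 : ℝ))
        = Lp.const 2 μ (1 : ℝ))
    (hweak : ∀ f g : Lp ℝ 2 μ,
      Tendsto (fun j => (inner ℝ (T (P j f) - P j f) g : ℝ)) atTop (nhds 0)) :
    ∀ f g : Lp ℝ 2 μ,
      Tendsto (fun j => (inner ℝ (P j f) g : ℝ)) atTop
        (nhds (inner ℝ ((∫ x, f x ∂μ) • (Lp.const 2 μ (1 : ℝ))) g)) := by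
  intro f g
  set e : Lp ℝ 2 μ := Lp.const 2 μ (1 : ℝ) with he
  -- inner with e equals integral
  have hinner_e : ∀ u : Lp ℝ 2 μ, (inner ℝ u e : ℝ) = ∫ x, u x ∂μ := by
    intro u
    rw [MeasureTheory.L2.inner_def]
    apply integral_congr_ae
    filter_upwards [Lp.coeFn_const 2 μ (1:ℝ)] with x hx
    rw [he]
    simp [hx]
  have hee : (inner ℝ e e : ℝ) = 1 := by
    rw [hinner_e, integral_congr_ae (Lp.coeFn_const 2 μ (1:ℝ))]
    simp
  -- the range of I - T
  set ℓ : Lp ℝ 2 μ →ₗ[ℝ] Lp ℝ 2 μ := LinearMap.id - (T.toLinearEquiv : Lp ℝ 2 μ →ₗ[ℝ] Lp ℝ 2 μ)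
  set K : Submodule ℝ (Lp ℝ 2 μ) := LinearMap.range ℓ with hK
  have hℓ : ∀ u, ℓ u = u - T u := fun u => rfl
  -- decompose g
  set c₁ : ℝ := inner ℝ g e with hc₁
  set g₀ : Lp ℝ 2 μ := g - c₁ • e with hg₀
  have hg₀e : (inner ℝ e g₀ : ℝ) = 0 := by
    rw [hg₀, inner_sub_right, inner_smul_right, hee, mul_one, hc₁, real_inner_comm g e,
      sub_self]
  -- g₀ lies in the closure of K
  have hg₀K : g₀ ∈ K.topologicalClosure := by
    rw [← Submodule.orthogonal_orthogonal_eq_closure]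
    rw [Submodule.mem_orthogonal]
    intro v hv
    rw [Submodule.mem_orthogonal] at hv
    have hv' : ∀ u, (inner ℝ (u - T u) v : ℝ) = 0 := fun u => hv _ ⟨u, rfl⟩
    have hfix : T v = v := by
      have key : ∀ u : Lp ℝ 2 μ, (inner ℝ u (v - T.symm v) : ℝ) = 0 := by
        intro u
        have h1 := hv' u
        rw [inner_sub_left] at h1
        have h2 : (inner ℝ (T u) v : ℝ) = inner ℝ u (T.symm v) := by
          conv_lhs => rw [show v = T (T.symm v) by simp]
          exact T.inner_map_map u (T.symm v)
        calc (inner ℝ u (v - T.symm v) : ℝ) = inner ℝ u v - inner ℝ u (T.symm v) :=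
              inner_sub_right _ _ _
          _ = inner ℝ u v - inner ℝ (T u) v := by rw [h2]
          _ = 0 := h1
      have hz : v - T.symm v = 0 := by
        have := key (v - T.symm v)
        rwa [inner_self_eq_zero] at this
      have hs : T.symm v = v := by
        rw [sub_eq_zero] at hz
        exact hz.symm
      conv_lhs => rw [← hs]
      simp
    obtain ⟨c, hc⟩ := herg v hfix
    rw [hc, real_inner_smul_left, hg₀e, mul_zero]
  -- ⟪P j f, e⟫ is constantly ⟪f, e⟫
  have hPe : ∀ j, (inner ℝ (P j f) e : ℝ) = inner ℝ f e := by
    intro j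
    rw [← ContinuousLinearMap.adjoint_inner_right, hP1adj j]
  -- bound on ‖P j f‖
  have hbd : ∀ j, ‖P j f‖ ≤ ‖f‖ := by
    intro j
    calc ‖P j f‖ ≤ ‖P j‖ * ‖f‖ := (P j).le_opNorm f
    _ ≤ 1 * ‖f‖ := mul_le_mul_of_nonneg_right (hcontr j) (norm_nonneg f)
    _ = ‖f‖ := one_mul _
  -- main limit: ⟪P j f, g₀⟫ → 0
  have hmain : Tendsto (fun j => (inner ℝ (P j f) g₀ : ℝ)) atTop (nhds 0) := by
    rw [Metric.tendsto_atTop]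
    intro ε hε
    have hden : (0:ℝ) < ‖f‖ + 1 := by positivity
    have hεf : 0 < ε / (2 * (‖f‖ + 1)) := by positivity
    have happrox : ∃ w : Lp ℝ 2 μ, ‖g₀ - ℓ w‖ < ε / (2 * (‖f‖ + 1)) := by
      have h2 := Metric.mem_closure_iff.mp hg₀K _ hεf
      obtain ⟨u, hu1, hu2⟩ := h2
      obtain ⟨w, hw⟩ := hu1
      exact ⟨w, by rw [hw]; rwa [dist_eq_norm] at hu2⟩
    obtain ⟨w, hw⟩ := happrox
    have hkey : ∀ j, (inner ℝ (P j f) (ℓ w) : ℝ) = (inner ℝ (T (P j f) - P j f) (T w) : ℝ) := by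
      intro j
      have h1 : (inner ℝ (P j f) w : ℝ) = inner ℝ (T (P j f)) (T w) := (T.inner_map_map _ _).symm
      rw [hℓ, inner_sub_right, inner_sub_left, h1]
    obtain ⟨N, hN⟩ := (Metric.tendsto_atTop.mp (hweak f (T w))) (ε/2) (by positivity)
    refine ⟨N, fun j hj => ?_⟩
    have h3 := hN j hj
    rw [Real.dist_eq, sub_zero] at h3 ⊢
    have hsplit : (inner ℝ (P j f) g₀ : ℝ) = inner ℝ (P j f) (g₀ - ℓ w) + inner ℝ (P j f) (ℓ w) := by
      rw [← inner_add_right, sub_add_cancel]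
    rw [hsplit]
    calc |((inner ℝ (P j f) (g₀ - ℓ w) : ℝ)) + inner ℝ (P j f) (ℓ w)|
        ≤ |(inner ℝ (P j f) (g₀ - ℓ w) : ℝ)| + |(inner ℝ (P j f) (ℓ w) : ℝ)| := abs_add_le _ _
      _ < ε/2 + ε/2 := by
          apply add_lt_add_of_le_of_lt
          · calc |(inner ℝ (P j f) (g₀ - ℓ w) : ℝ)| ≤ ‖P j f‖ * ‖g₀ - ℓ w‖ :=
                abs_real_inner_le_norm _ _
              _ ≤ ‖f‖ * (ε / (2 * (‖f‖ + 1))) :=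
                mul_le_mul (hbd j) hw.le (norm_nonneg _) (norm_nonneg _)
              _ ≤ ε/2 := by
                rw [mul_comm, div_mul_eq_mul_div, div_le_div_iff₀ (by positivity) two_pos]
                nlinarith [norm_nonneg f, hε.le]
          · rw [hkey j]; exact h3
      _ = ε := by ring
  -- combine
  have hiden : ∀ j, (inner ℝ (P j f) g : ℝ) = (inner ℝ f e : ℝ) * c₁ + inner ℝ (P j f) g₀ := by
    intro j
    have hgdec : g = c₁ • e + g₀ := by rw [hg₀]; abel
    conv_lhs => rw [hgdec]
    rw [inner_add_right, real_inner_smul_right, hPe j]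
    ring
  have htarget : (inner ℝ ((∫ x, f x ∂μ) • e) g : ℝ) = (inner ℝ f e : ℝ) * c₁ := by
    rw [real_inner_smul_left, ← hinner_e f, hc₁, real_inner_comm g e]
  rw [htarget]
  have hlim := hmain.const_add ((inner ℝ f e : ℝ) * c₁)
  rw [add_zero] at hlim
  exact hlim.congr (fun j => (hiden j).symm)
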